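/- Let n ≥ 1 and let S : ℝ → ℝ be differentiable on [0,∞) with 0 < S(y) ≤ 1 for all y ≥ 0 and with S′(y) = −f(y) where f : [0,∞) → ℝ is nonnegative and nonincreasing. Let g : ℝ → ℝ satisfy 0 < g(t) < 1 for every t > 0, g antitone and convex on (0,∞). Let v, u, α, β : Fin n → ℝ be positive nondecreasing tuples such that for every k = 1,…,n: Σ_{i=1}^k α i ≤ Σ_{i=1}^k β i and Σ_{i=1}^k v i ≤ Σ_{i=1}^k u i. Let q₁, q₂ : {1,…,n} → ℝ be nonnegative with Σ_{m=1}^n q₁(m) = Σ_{m=1}^n q₂(m) = 1 and Σ_{m=k}^n q₂(m) ≤ Σ_{m=k}^n q₁(m) for every k. Then for every x ≥ 0: Σ_{m=1}^n q₁(m) · ∏_{i=1}^m (1 − g(v i)·S(α i · x)) ≤ Σ_{m=1}^n q₂(m) · ∏_{i=1}^m (1 − g(u i)·S(β i · x)). -/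

import Mathlib

open Finset

/-- Sum of the first `k` entries of the tuple `a`. -/
noncomputable def prefixSum {n : ℕ} (a : Fin n → ℝ) (k : ℕ) : ℝ :=
  ∑ i ∈ Finset.univ.filter (fun i : Fin n => (i : ℕ) < k), a i

/-- Product of the first `m` entries of the tuple `c`. -/
noncomputable def prefixProd {n : ℕ} (c : Fin n → ℝ) (m : ℕ) : ℝ :=
  ∏ i ∈ Finset.univ.filter (fun i : Fin n => (i : ℕ) < m), c i


/-- Abel-summation lemma: if prefix sums of `e` are nonnegative and `D` is
nonnegative and antitone on the support of `e`, then `∑ D i * e i ≥ 0`. -/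
lemma abel_aux : ∀ (m : ℕ) (e D : ℕ → ℝ),
    (∀ i j, i ≤ j → j < m → e i ≠ 0 → e j ≠ 0 → D j ≤ D i) →
    (∀ i, i < m → e i ≠ 0 → 0 ≤ D i) →
    (∀ k, k ≤ m → 0 ≤ ∑ i ∈ range k, e i) →
    0 ≤ ∑ i ∈ range m, D i * e i := by
  intro m
  induction m with
  | zero => intro e D _ _ _; simp
  | succ m ih =>
    intro e D hmono hpos hpre
    by_cases hem : e m = 0
    · rw [Finset.sum_range_succ, hem, mul_zero, add_zero]
      exact ih e D (fun i j hij hj => hmono i j hij (by omega))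
        (fun i hi => hpos i (by omega)) (fun k hk => hpre k (by omega))
    · have h1 : 0 ≤ ∑ i ∈ range m, (D i - D m) * e i := by
        refine ih e (fun i => D i - D m) ?_ ?_ (fun k hk => hpre k (by omega))
        · intro i j hij hj hei hej
          have := hmono i j hij (by omega) hei hej
          linarith
        · intro i hi hei
          have := hmono i m (by omega) (by omega) hei hem
          linarith
      have h2 : 0 ≤ D m * ∑ i ∈ range (m+1), e i :=
        mul_nonneg (hpos m (by omega) hem) (hpre (m+1) le_rfl)
      have h3 : ∑ i ∈ range (m+1), D i * e i
          = (∑ i ∈ range m, (D i - D m) * e i) + D m * ∑ i ∈ range (m+1), e i := by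
        simp only [sub_mul, Finset.sum_sub_distrib, Finset.mul_sum, Finset.sum_range_succ]
        rw [← Finset.mul_sum]; ring
      rw [h3]; linarith

lemma prefixSum_eq {n : ℕ} (a : Fin n → ℝ) {k : ℕ} (hk : k ≤ n) :
    prefixSum a k = ∑ i ∈ range k, (if h : i < n then a ⟨i, h⟩ else 0) := by
  unfold prefixSum
  rw [Finset.sum_filter]
  have step : ∀ i : Fin n, (if (i:ℕ) < k then a i else 0)
      = (fun j : ℕ => if j < k then (if h : j < n then a ⟨j, h⟩ else 0) else 0) (i : ℕ) := by
    intro i; simp only [i.isLt, dif_pos, Fin.eta]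
  rw [Finset.sum_congr rfl (fun i _ => step i)]
  rw [Fin.sum_univ_eq_sum_range (fun i => if i < k then (if h : i < n then a ⟨i, h⟩ else 0) else 0) n]
  rw [← Finset.sum_filter]
  congr 1
  ext i
  simp only [Finset.mem_filter, Finset.mem_range]
  omega

lemma prefixProd_eq {n : ℕ} (a : Fin n → ℝ) {k : ℕ} (hk : k ≤ n) :
    prefixProd a k = ∏ i ∈ range k, (if h : i < n then a ⟨i, h⟩ else 1) := by
  unfold prefixProd
  rw [Finset.prod_filter]
  have step : ∀ i : Fin n, (if (i:ℕ) < k then a i else 1)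
      = (fun j : ℕ => if j < k then (if h : j < n then a ⟨j, h⟩ else 1) else 1) (i : ℕ) := by
    intro i; simp only [i.isLt, dif_pos, Fin.eta]
  rw [Finset.prod_congr rfl (fun i _ => step i)]
  rw [Fin.prod_univ_eq_prod_range (fun i => if i < k then (if h : i < n then a ⟨i, h⟩ else 1) else 1) n]
  rw [← Finset.prod_filter]
  congr 1
  ext i
  simp only [Finset.mem_filter, Finset.mem_range]
  omega

/-- For a concave function on `Ioi 0`, secant slopes decrease as the interval
moves to the right. -/
lemma concave_slope_anti {h : ℝ → ℝ} (hc : ConcaveOn ℝ (Set.Ioi 0) h)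
    {a b a' b' : ℝ} (ha : 0 < a) (ha' : 0 < a') (haa : a ≤ a') (hbb : b ≤ b')
    (hab : a < b) (hab' : a' < b') :
    (h b' - h a') / (b' - a') ≤ (h b - h a) / (b - a) := by
  have hb : (0:ℝ) < b := lt_trans ha hab
  have hb' : (0:ℝ) < b' := lt_trans ha' hab'
  have hH : ConvexOn ℝ (Set.Ioi 0) (fun t => -h t) := hc.neg
  have h1 : ((-h b) - (-h a)) / (b - a) ≤ ((-h b') - (-h a)) / (b' - a) :=
    hH.secant_mono (Set.mem_Ioi.mpr ha) (Set.mem_Ioi.mpr hb) (Set.mem_Ioi.mpr hb')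
      (ne_of_gt hab) (ne_of_gt (lt_of_lt_of_le hab hbb)) hbb
  have h2 : ((-h a) - (-h b')) / (a - b') ≤ ((-h a') - (-h b')) / (a' - b') :=
    hH.secant_mono (Set.mem_Ioi.mpr hb') (Set.mem_Ioi.mpr ha) (Set.mem_Ioi.mpr ha')
      (ne_of_lt (lt_of_lt_of_le hab hbb)) (ne_of_lt hab') haa
  have e1 : ((-h a) - (-h b')) / (a - b') = ((-h b') - (-h a)) / (b' - a) := by
    rw [← neg_sub ((-h b')) ((-h a)), ← neg_sub b' a, neg_div_neg_eq]
  have e2 : ((-h b) - (-h a)) / (b - a) = -((h b - h a) / (b - a)) := by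
    rw [← neg_div]; ring_nf
  have e3 : ((-h a') - (-h b')) / (a' - b') = -((h b' - h a') / (b' - a')) := by
    rw [← neg_sub ((-h b')) ((-h a')), ← neg_sub b' a', neg_div_neg_eq, ← neg_div]; ring_nf
  rw [e1] at h2
  rw [e2] at h1
  rw [e3] at h2
  linarith

/-- Comparing slopes of `log (1 - c·φ)` as `c` varies. -/
lemma slope_c_mono {φ : ℝ → ℝ} (hφ_anti : AntitoneOn φ (Set.Ioi 0))
    (hφ_pos : ∀ t > (0:ℝ), 0 < φ t)
    {c c' a b : ℝ} (hc' : 0 < c') (hcc : c' ≤ c)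
    (hb1 : ∀ t > (0:ℝ), c * φ t < 1)
    (ha : 0 < a) (hab : a < b) :
    (Real.log (1 - c' * φ b) - Real.log (1 - c' * φ a)) / (b - a) ≤
      (Real.log (1 - c * φ b) - Real.log (1 - c * φ a)) / (b - a) := by
  have hbpos : (0:ℝ) < b := lt_trans ha hab
  have hφa := hφ_pos a ha
  have hφb := hφ_pos b hbpos
  have hx2 : 0 < 1 - c * φ b := by linarith [hb1 b hbpos]
  have hy2 : 0 < 1 - c * φ a := by linarith [hb1 a ha]
  have hx1 : 0 < 1 - c' * φ b := by nlinarith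
  have hy1 : 0 < 1 - c' * φ a := by nlinarith
  have hba : (0:ℝ) < b - a := by linarith
  have hφba : φ b ≤ φ a := hφ_anti (Set.mem_Ioi.mpr ha) (Set.mem_Ioi.mpr hbpos) hab.le
  have key : (1 - c' * φ b) * (1 - c * φ a) ≤ (1 - c * φ b) * (1 - c' * φ a) := by
    nlinarith [mul_nonneg (sub_nonneg.mpr hcc) (sub_nonneg.mpr hφba)]
  have hlog := Real.log_le_log (by positivity) key
  rw [Real.log_mul (ne_of_gt hx1) (ne_of_gt hy2), Real.log_mul (ne_of_gt hx2) (ne_of_gt hy1)]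
    at hlog
  have hnum : Real.log (1 - c' * φ b) - Real.log (1 - c' * φ a) ≤
      Real.log (1 - c * φ b) - Real.log (1 - c * φ a) := by linarith
  exact div_le_div_of_nonneg_right hnum hba.le

/-- `log (1 - c·φ)` is concave when `φ` is convex, positive, with `c·φ < 1`, `c > 0`. -/
lemma concave_log_one_sub {c : ℝ} {φ : ℝ → ℝ} (hcpos : 0 < c)
    (hφ_conv : ConvexOn ℝ (Set.Ioi 0) φ) (hφ_pos : ∀ t > (0:ℝ), 0 < φ t)
    (hb1 : ∀ t > (0:ℝ), c * φ t < 1) :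
    ConcaveOn ℝ (Set.Ioi 0) (fun t => Real.log (1 - c * φ t)) := by
  refine ⟨convex_Ioi 0, ?_⟩
  intro x hx y hy p q hp hq hpq
  simp only [smul_eq_mul]
  have hx0 : (0:ℝ) < x := hx
  have hy0 : (0:ℝ) < y := hy
  have hcomb : (0:ℝ) < p * x + q * y := by
    rcases hp.lt_or_eq with hp' | hp'
    · have h1 := mul_pos hp' hx0
      have h2 : 0 ≤ q * y := mul_nonneg hq hy0.le
      linarith
    · have hq1 : q = 1 := by linarith
      rw [← hp', hq1]; simpa using hy0
  have hφc := hφ_conv.2 hx hy hp hq hpq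
  simp only [smul_eq_mul] at hφc
  have hpx : 0 < 1 - c * φ x := by linarith [hb1 x hx0]
  have hpy : 0 < 1 - c * φ y := by linarith [hb1 y hy0]
  have h1 : p * (1 - c * φ x) + q * (1 - c * φ y) ≤ 1 - c * φ (p * x + q * y) := by
    nlinarith
  have h2 : p * Real.log (1 - c * φ x) + q * Real.log (1 - c * φ y) ≤
      Real.log (p * (1 - c * φ x) + q * (1 - c * φ y)) := by
    have := strictConcaveOn_log_Ioi.concaveOn.2 (Set.mem_Ioi.mpr hpx) (Set.mem_Ioi.mpr hpy)
      hp hq hpq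
    simpa using this
  have h3 : Real.log (p * (1 - c * φ x) + q * (1 - c * φ y)) ≤
      Real.log (1 - c * φ (p * x + q * y)) :=
    Real.log_le_log (by
      rcases hp.lt_or_eq with hp' | hp'
      · have h1 := mul_pos hp' hpx
        have h2 : 0 ≤ q * (1 - c * φ y) := mul_nonneg hq hpy.le
        linarith
      · have hq1 : q = 1 := by linarith
        rw [← hp', hq1]; simpa using hpy) h1
  linarith

lemma key_sum {n : ℕ} {m : ℕ} (hm : m ≤ n) (c : Fin n → ℝ) (φ : ℝ → ℝ)
    (hc_pos : ∀ i, 0 < c i) (hc_anti : ∀ i j : Fin n, i ≤ j → c j ≤ c i)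
    (hφ_pos : ∀ t > (0:ℝ), 0 < φ t)
    (hφ_anti : AntitoneOn φ (Set.Ioi 0))
    (hφ_conv : ConvexOn ℝ (Set.Ioi 0) φ)
    (hbound : ∀ (i : Fin n), ∀ t > (0:ℝ), c i * φ t < 1)
    (v u : Fin n → ℝ) (hv : ∀ i, 0 < v i) (hu : ∀ i, 0 < u i)
    (hvm : Monotone v) (hum : Monotone u)
    (hmaj : ∀ k, k ≤ m → prefixSum v k ≤ prefixSum u k) :
    prefixSum (fun i => Real.log (1 - c i * φ (v i))) m ≤
      prefixSum (fun i => Real.log (1 - c i * φ (u i))) m := by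
  classical
  -- abbreviations
  set e : ℕ → ℝ := fun i => if h : i < n then u ⟨i, h⟩ - v ⟨i, h⟩ else 0 with he
  set D : ℕ → ℝ := fun i =>
    if h : i < n then
      (if u ⟨i, h⟩ = v ⟨i, h⟩ then 0 else
        (Real.log (1 - c ⟨i, h⟩ * φ (u ⟨i, h⟩)) -
            Real.log (1 - c ⟨i, h⟩ * φ (v ⟨i, h⟩))) / (u ⟨i, h⟩ - v ⟨i, h⟩))
    else 0 with hD
  -- generic facts about slopes
  have hslope_nonneg : ∀ (k : Fin n) (a b : ℝ), 0 < a → a < b →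
      0 ≤ (Real.log (1 - c k * φ b) - Real.log (1 - c k * φ a)) / (b - a) := by
    intro k a b ha hab
    have hb : (0:ℝ) < b := lt_trans ha hab
    have h1 : 0 < 1 - c k * φ b := by linarith [hbound k b hb]
    have h2 : 0 < 1 - c k * φ a := by linarith [hbound k a ha]
    have hφba : φ b ≤ φ a := hφ_anti (Set.mem_Ioi.mpr ha) (Set.mem_Ioi.mpr hb) hab.le
    have hFa : 1 - c k * φ a ≤ 1 - c k * φ b := by
      have := mul_le_mul_of_nonneg_left hφba (hc_pos k).le
      linarith
    have := Real.log_le_log h2 hFa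
    apply div_nonneg (by linarith) (by linarith)
  -- representation of D at indices where u ≠ v, as a slope over [min, max]
  have hrepr : ∀ (k : ℕ) (hk : k < n), u ⟨k, hk⟩ ≠ v ⟨k, hk⟩ →
      D k = (Real.log (1 - c ⟨k, hk⟩ * φ (max (v ⟨k, hk⟩) (u ⟨k, hk⟩))) -
          Real.log (1 - c ⟨k, hk⟩ * φ (min (v ⟨k, hk⟩) (u ⟨k, hk⟩)))) /
          (max (v ⟨k, hk⟩) (u ⟨k, hk⟩) - min (v ⟨k, hk⟩) (u ⟨k, hk⟩)) := by
    intro k hk hne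
    simp only [hD, dif_pos hk, if_neg hne]
    rcases lt_or_gt_of_ne hne with hlt | hgt
    · -- u < v
      rw [max_eq_left hlt.le, min_eq_right hlt.le]
      rw [← neg_sub (Real.log (1 - c ⟨k, hk⟩ * φ (v ⟨k, hk⟩)))
        (Real.log (1 - c ⟨k, hk⟩ * φ (u ⟨k, hk⟩))), ← neg_sub (v ⟨k, hk⟩) (u ⟨k, hk⟩),
        neg_div_neg_eq]
    · rw [max_eq_right hgt.le, min_eq_left hgt.le]
  -- hypotheses of the Abel lemma
  have hpos : ∀ i, i < m → e i ≠ 0 → 0 ≤ D i := by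
    intro i him hei
    have hin : i < n := lt_of_lt_of_le him hm
    simp only [he, dif_pos hin] at hei
    have hne : u ⟨i, hin⟩ ≠ v ⟨i, hin⟩ := fun hh => hei (by rw [hh]; ring)
    rw [hrepr i hin hne]
    have hminpos : 0 < min (v ⟨i, hin⟩) (u ⟨i, hin⟩) := lt_min (hv _) (hu _)
    have hminmax : min (v ⟨i, hin⟩) (u ⟨i, hin⟩) < max (v ⟨i, hin⟩) (u ⟨i, hin⟩) :=
      min_lt_max.mpr (Ne.symm hne)
    exact hslope_nonneg _ _ _ hminpos hminmax
  have hmono : ∀ i j, i ≤ j → j < m → e i ≠ 0 → e j ≠ 0 → D j ≤ D i := by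
    intro i j hij hjm hei hej
    have hjn : j < n := lt_of_lt_of_le hjm hm
    have hin : i < n := lt_of_le_of_lt hij hjn
    simp only [he, dif_pos hin] at hei
    simp only [he, dif_pos hjn] at hej
    have hnei : u ⟨i, hin⟩ ≠ v ⟨i, hin⟩ := fun hh => hei (by rw [hh]; ring)
    have hnej : u ⟨j, hjn⟩ ≠ v ⟨j, hjn⟩ := fun hh => hej (by rw [hh]; ring)
    rw [hrepr i hin hnei, hrepr j hjn hnej]
    set ai := min (v ⟨i, hin⟩) (u ⟨i, hin⟩) with hai
    set bi := max (v ⟨i, hin⟩) (u ⟨i, hin⟩) with hbi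
    set aj := min (v ⟨j, hjn⟩) (u ⟨j, hjn⟩) with haj
    set bj := max (v ⟨j, hjn⟩) (u ⟨j, hjn⟩) with hbj
    have hFinle : (⟨i, hin⟩ : Fin n) ≤ ⟨j, hjn⟩ := Fin.mk_le_mk.mpr hij
    have hai0 : 0 < ai := lt_min (hv _) (hu _)
    have haj0 : 0 < aj := lt_min (hv _) (hu _)
    have haibi : ai < bi := min_lt_max.mpr (Ne.symm hnei)
    have hajbj : aj < bj := min_lt_max.mpr (Ne.symm hnej)
    have haij : ai ≤ aj := min_le_min (hvm hFinle) (hum hFinle)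
    have hbij : bi ≤ bj := max_le_max (hvm hFinle) (hum hFinle)
    have step1 : (Real.log (1 - c ⟨j, hjn⟩ * φ bj) - Real.log (1 - c ⟨j, hjn⟩ * φ aj)) / (bj - aj)
        ≤ (Real.log (1 - c ⟨i, hin⟩ * φ bj) - Real.log (1 - c ⟨i, hin⟩ * φ aj)) / (bj - aj) :=
      slope_c_mono hφ_anti hφ_pos (hc_pos _) (hc_anti _ _ hFinle) (hbound _) haj0 hajbj
    have step2 : (Real.log (1 - c ⟨i, hin⟩ * φ bj) - Real.log (1 - c ⟨i, hin⟩ * φ aj)) / (bj - aj)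
        ≤ (Real.log (1 - c ⟨i, hin⟩ * φ bi) - Real.log (1 - c ⟨i, hin⟩ * φ ai)) / (bi - ai) :=
      concave_slope_anti
        (concave_log_one_sub (hc_pos _) hφ_conv hφ_pos (hbound _)) hai0 haj0 haij hbij haibi hajbj
    exact step1.trans step2
  have hpre : ∀ k, k ≤ m → 0 ≤ ∑ i ∈ range k, e i := by
    intro k hk
    have hkn : k ≤ n := hk.trans hm
    have hsplit : ∑ i ∈ range k, e i = prefixSum u k - prefixSum v k := by
      rw [prefixSum_eq u hkn, prefixSum_eq v hkn, ← Finset.sum_sub_distrib]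
      apply Finset.sum_congr rfl
      intro i hi
      simp only [he]
      by_cases h : i < n
      · simp [h]
      · simp [h]
    rw [hsplit]
    exact sub_nonneg.mpr (hmaj k hk)
  have habel := abel_aux m e D hmono hpos hpre
  -- termwise identity
  have hterm : ∀ i ∈ range m, D i * e i =
      (if h : i < n then Real.log (1 - c ⟨i, h⟩ * φ (u ⟨i, h⟩)) else 0) -
      (if h : i < n then Real.log (1 - c ⟨i, h⟩ * φ (v ⟨i, h⟩)) else 0) := by
    intro i hi
    have hin : i < n := lt_of_lt_of_le (Finset.mem_range.mp hi) hm
    simp only [hD, he, dif_pos hin]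
    by_cases hne : u ⟨i, hin⟩ = v ⟨i, hin⟩
    · rw [if_pos hne, hne]; ring
    · rw [if_neg hne]
      rw [div_mul_cancel₀ _ (sub_ne_zero.mpr hne)]
  rw [prefixSum_eq _ hm, prefixSum_eq _ hm]
  have hsum : ∑ i ∈ range m, D i * e i =
      (∑ i ∈ range m, (if h : i < n then Real.log (1 - c ⟨i, h⟩ * φ (u ⟨i, h⟩)) else 0)) -
      (∑ i ∈ range m, (if h : i < n then Real.log (1 - c ⟨i, h⟩ * φ (v ⟨i, h⟩)) else 0)) := by
    rw [← Finset.sum_sub_distrib]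
    exact Finset.sum_congr rfl hterm
  rw [hsum] at habel
  linarith

lemma key_prod {n : ℕ} {m : ℕ} (hm : m ≤ n) (c : Fin n → ℝ) (φ : ℝ → ℝ)
    (hc_pos : ∀ i, 0 < c i) (hc_anti : ∀ i j : Fin n, i ≤ j → c j ≤ c i)
    (hφ_pos : ∀ t > (0:ℝ), 0 < φ t)
    (hφ_anti : AntitoneOn φ (Set.Ioi 0))
    (hφ_conv : ConvexOn ℝ (Set.Ioi 0) φ)
    (hbound : ∀ (i : Fin n), ∀ t > (0:ℝ), c i * φ t < 1)
    (v u : Fin n → ℝ) (hv : ∀ i, 0 < v i) (hu : ∀ i, 0 < u i)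
    (hvm : Monotone v) (hum : Monotone u)
    (hmaj : ∀ k, k ≤ m → prefixSum v k ≤ prefixSum u k) :
    prefixProd (fun i => 1 - c i * φ (v i)) m ≤ prefixProd (fun i => 1 - c i * φ (u i)) m := by
  have hFv : ∀ i : Fin n, 0 < 1 - c i * φ (v i) := fun i => by linarith [hbound i (v i) (hv i)]
  have hFu : ∀ i : Fin n, 0 < 1 - c i * φ (u i) := fun i => by linarith [hbound i (u i) (hu i)]
  have hPv : 0 < prefixProd (fun i => 1 - c i * φ (v i)) m :=
    Finset.prod_pos (fun i _ => hFv i)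
  have hPu : 0 < prefixProd (fun i => 1 - c i * φ (u i)) m :=
    Finset.prod_pos (fun i _ => hFu i)
  rw [← Real.log_le_log_iff hPv hPu]
  have h1 : Real.log (prefixProd (fun i => 1 - c i * φ (v i)) m) =
      prefixSum (fun i => Real.log (1 - c i * φ (v i))) m :=
    Real.log_prod (fun i _ => ne_of_gt (hFv i))
  have h2 : Real.log (prefixProd (fun i => 1 - c i * φ (u i)) m) =
      prefixSum (fun i => Real.log (1 - c i * φ (u i))) m :=
    Real.log_prod (fun i _ => ne_of_gt (hFu i))
  rw [h1, h2]
  exact key_sum hm c φ hc_pos hc_anti hφ_pos hφ_anti hφ_conv hbound v u hv hu hvm hum hmaj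

lemma prefixProd_nonneg {n : ℕ} {c : Fin n → ℝ} (h0 : ∀ i, 0 ≤ c i) (k : ℕ) :
    0 ≤ prefixProd c k :=
  Finset.prod_nonneg (fun i _ => h0 i)

lemma prefixProd_anti {n : ℕ} {c : Fin n → ℝ} (h0 : ∀ i, 0 ≤ c i) (h1 : ∀ i, c i ≤ 1)
    {k l : ℕ} (hkl : k ≤ l) : prefixProd c l ≤ prefixProd c k := by
  unfold prefixProd
  have hsub : Finset.univ.filter (fun i : Fin n => (i : ℕ) < k) ⊆
      Finset.univ.filter (fun i : Fin n => (i : ℕ) < l) := by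
    intro i hi
    simp only [Finset.mem_filter, Finset.mem_univ, true_and] at hi ⊢
    omega
  rw [← Finset.prod_sdiff hsub]
  apply mul_le_of_le_one_left (Finset.prod_nonneg (fun i _ => h0 i))
  exact Finset.prod_le_one (fun i _ => h0 i) (fun i _ => h1 i)

lemma mix_le {n : ℕ} (P q₁ q₂ : ℕ → ℝ)
    (hPanti : ∀ k l : ℕ, k ≤ l → P l ≤ P k) (hPnn : ∀ k, 0 ≤ P k)
    (hq₁sum : ∑ m ∈ Finset.Icc 1 n, q₁ m = 1)
    (hq₂sum : ∑ m ∈ Finset.Icc 1 n, q₂ m = 1)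
    (hst : ∀ k, 1 ≤ k → k ≤ n →
      ∑ m ∈ Finset.Icc k n, q₂ m ≤ ∑ m ∈ Finset.Icc k n, q₁ m) :
    ∑ m ∈ Finset.Icc 1 n, q₁ m * P m ≤ ∑ m ∈ Finset.Icc 1 n, q₂ m * P m := by
  have habel := abel_aux n (fun i => q₂ (1 + i) - q₁ (1 + i)) (fun i => P (1 + i))
    (fun i j hij _ _ _ => hPanti (1 + i) (1 + j) (by omega))
    (fun i _ _ => hPnn (1 + i))
    ?_
  · have hIcc : ∀ r : ℕ → ℝ, ∑ m ∈ Finset.Icc 1 n, r m = ∑ i ∈ range n, r (1 + i) := by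
      intro r
      rw [← Finset.Ico_add_one_right_eq_Icc, Finset.sum_Ico_eq_sum_range]
      simp
    rw [hIcc (fun m => q₁ m * P m), hIcc (fun m => q₂ m * P m)]
    have := Finset.sum_sub_distrib (s := range n)
      (f := fun i => q₂ (1 + i) * P (1 + i)) (g := fun i => q₁ (1 + i) * P (1 + i))
    have hEq : ∑ i ∈ range n, P (1 + i) * (q₂ (1 + i) - q₁ (1 + i)) =
        (∑ i ∈ range n, q₂ (1 + i) * P (1 + i)) - ∑ i ∈ range n, q₁ (1 + i) * P (1 + i) := by
      rw [← Finset.sum_sub_distrib]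
      exact Finset.sum_congr rfl (fun i _ => by ring)
    rw [hEq] at habel
    linarith
  · intro k hk
    have hprefix : ∀ r : ℕ → ℝ, ∑ i ∈ range k, r (1 + i) = ∑ m ∈ Finset.Icc 1 k, r m := by
      intro r
      rw [← Finset.Ico_add_one_right_eq_Icc, Finset.sum_Ico_eq_sum_range]
      simp
    have hsplit : ∀ r : ℕ → ℝ, (∑ m ∈ Finset.Icc 1 k, r m) + ∑ m ∈ Finset.Icc (k+1) n, r m
        = ∑ m ∈ Finset.Icc 1 n, r m := by
      intro r
      rw [← Finset.Ico_add_one_right_eq_Icc, ← Finset.Ico_add_one_right_eq_Icc, ← Finset.Ico_add_one_right_eq_Icc]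
      exact Finset.sum_Ico_consecutive r (by omega) (by omega)
    have he : ∑ i ∈ range k, (q₂ (1 + i) - q₁ (1 + i)) =
        (∑ m ∈ Finset.Icc 1 k, q₂ m) - ∑ m ∈ Finset.Icc 1 k, q₁ m := by
      rw [Finset.sum_sub_distrib, hprefix q₂, hprefix q₁]
    rw [he]
    have h1 := hsplit q₁
    have h2 := hsplit q₂
    rcases Nat.lt_or_ge k n with hkn | hkn
    · have := hst (k + 1) (by omega) (by omega)
      rw [hq₁sum] at h1; rw [hq₂sum] at h2
      linarith
    · have hkn' : k = n := le_antisymm hk hkn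
      subst hkn'
      have hempty : Finset.Icc (k+1) k = ∅ := by
        apply Finset.Icc_eq_empty; omega
      rw [hempty, Finset.sum_empty] at h1 h2
      rw [hq₁sum] at h1; rw [hq₂sum] at h2
      linarith

lemma prefixSum_zero {n : ℕ} (a : Fin n → ℝ) : prefixSum a 0 = 0 := by
  unfold prefixSum
  rw [Finset.filter_false_of_mem (fun i _ => by omega), Finset.sum_empty]

/-- Theorem 3.7: scale-family severities, largest claim amounts with
random numbers of claims, usual stochastic order. -/
theorem stmt_7 {n : ℕ} (hn : 1 ≤ n) (S f g : ℝ → ℝ)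
    (hS : ∀ y ≥ (0 : ℝ), 0 < S y ∧ S y ≤ 1)
    (hS' : ∀ y ≥ (0 : ℝ), HasDerivAt S (-(f y)) y)
    (hf_nonneg : ∀ y ≥ (0 : ℝ), 0 ≤ f y)
    (hf_anti : AntitoneOn f (Set.Ici 0))
    (hg : ∀ t > 0, 0 < g t ∧ g t < 1)
    (hg_anti : AntitoneOn g (Set.Ioi 0))
    (hg_conv : ConvexOn ℝ (Set.Ioi 0) g)
    (v u α β : Fin n → ℝ)
    (hv : ∀ i, 0 < v i) (hu : ∀ i, 0 < u i)
    (hα : ∀ i, 0 < α i) (hβ : ∀ i, 0 < β i)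
    (hvm : Monotone v) (hum : Monotone u) (hαm : Monotone α) (hβm : Monotone β)
    (hmajα : ∀ k, 1 ≤ k → k ≤ n → prefixSum α k ≤ prefixSum β k)
    (hmajv : ∀ k, 1 ≤ k → k ≤ n → prefixSum v k ≤ prefixSum u k)
    (q₁ q₂ : ℕ → ℝ)
    (hq₁ : ∀ m ∈ Finset.Icc 1 n, 0 ≤ q₁ m) (hq₂ : ∀ m ∈ Finset.Icc 1 n, 0 ≤ q₂ m)
    (hq₁sum : ∑ m ∈ Finset.Icc 1 n, q₁ m = 1)
    (hq₂sum : ∑ m ∈ Finset.Icc 1 n, q₂ m = 1)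
    (hst : ∀ k, 1 ≤ k → k ≤ n →
      ∑ m ∈ Finset.Icc k n, q₂ m ≤ ∑ m ∈ Finset.Icc k n, q₁ m) :
    ∀ x ≥ (0 : ℝ),
      ∑ m ∈ Finset.Icc 1 n,
          q₁ m * prefixProd (fun i => 1 - g (v i) * S (α i * x)) m ≤
        ∑ m ∈ Finset.Icc 1 n,
          q₂ m * prefixProd (fun i => 1 - g (u i) * S (β i * x)) m := by
  intro x hx
  -- properties of S
  have hSC : ContinuousOn S (Set.Ici 0) :=
    fun y hy => ((hS' y hy).continuousAt).continuousWithinAt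
  have hSdiff : DifferentiableOn ℝ S (interior (Set.Ici (0:ℝ))) := by
    rw [interior_Ici]
    exact fun y hy => ((hS' y (le_of_lt hy)).differentiableAt).differentiableWithinAt
  have hS_anti : AntitoneOn S (Set.Ici 0) := by
    apply antitoneOn_of_deriv_nonpos (convex_Ici 0) hSC hSdiff
    intro y hy
    rw [interior_Ici] at hy
    rw [(hS' y (le_of_lt hy)).deriv]
    linarith [hf_nonneg y (le_of_lt hy)]
  have hS_conv : ConvexOn ℝ (Set.Ici 0) S := by
    have hmono' : MonotoneOn (deriv S) (interior (Set.Ici (0:ℝ))) := by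
      rw [interior_Ici]
      intro a ha b hb hab
      rw [(hS' a (le_of_lt ha)).deriv, (hS' b (le_of_lt hb)).deriv]
      have := hf_anti (Set.mem_Ici.mpr (le_of_lt ha)) (Set.mem_Ici.mpr (le_of_lt hb)) hab
      linarith
    exact hmono'.convexOn_of_deriv (convex_Ici 0) hSC hSdiff
  -- step A : compare v with u, keeping α
  have hαx : ∀ i, (0:ℝ) ≤ α i * x := fun i => mul_nonneg (hα i).le hx
  have hβx : ∀ i, (0:ℝ) ≤ β i * x := fun i => mul_nonneg (hβ i).le hx
  have hmaj_vu : ∀ m, m ≤ n → ∀ k, k ≤ m → prefixSum v k ≤ prefixSum u k := by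
    intro m hm k hk
    rcases Nat.eq_zero_or_pos k with rfl | hk1
    · rw [prefixSum_zero, prefixSum_zero]
    · exact hmajv k hk1 (hk.trans hm)
  have hmaj_αβ : ∀ m, m ≤ n → ∀ k, k ≤ m → prefixSum α k ≤ prefixSum β k := by
    intro m hm k hk
    rcases Nat.eq_zero_or_pos k with rfl | hk1
    · rw [prefixSum_zero, prefixSum_zero]
    · exact hmajα k hk1 (hk.trans hm)
  have stepA : ∀ m, m ≤ n →
      prefixProd (fun i => 1 - g (v i) * S (α i * x)) m ≤
        prefixProd (fun i => 1 - g (u i) * S (α i * x)) m := by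
    intro m hm
    have hrw1 : (fun i : Fin n => 1 - g (v i) * S (α i * x)) =
        fun i : Fin n => 1 - S (α i * x) * g (v i) := by funext i; ring
    have hrw2 : (fun i : Fin n => 1 - g (u i) * S (α i * x)) =
        fun i : Fin n => 1 - S (α i * x) * g (u i) := by funext i; ring
    rw [hrw1, hrw2]
    apply key_prod hm (fun i => S (α i * x)) g
      (fun i => (hS _ (hαx i)).1)
      (fun i j hij => hS_anti (Set.mem_Ici.mpr (hαx i)) (Set.mem_Ici.mpr (hαx j))
        (mul_le_mul_of_nonneg_right (hαm hij) hx))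
      (fun t ht => (hg t ht).1) hg_anti hg_conv
      (fun i t ht => by
        have h1 := hS _ (hαx i)
        have h2 := hg t ht
        nlinarith)
      v u hv hu hvm hum (hmaj_vu m hm)
  -- step B : compare α with β, keeping u
  have stepB : ∀ m, m ≤ n →
      prefixProd (fun i => 1 - g (u i) * S (α i * x)) m ≤
        prefixProd (fun i => 1 - g (u i) * S (β i * x)) m := by
    intro m hm
    have hφ_pos : ∀ t > (0:ℝ), 0 < S (t * x) :=
      fun t ht => (hS _ (mul_nonneg ht.le hx)).1
    have hφ_anti : AntitoneOn (fun t => S (t * x)) (Set.Ioi 0) := by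
      intro t1 h1 t2 h2 h12
      exact hS_anti (Set.mem_Ici.mpr (mul_nonneg (le_of_lt h1) hx))
        (Set.mem_Ici.mpr (mul_nonneg (le_of_lt h2) hx))
        (mul_le_mul_of_nonneg_right h12 hx)
    have hφ_conv : ConvexOn ℝ (Set.Ioi 0) (fun t => S (t * x)) := by
      refine ⟨convex_Ioi 0, ?_⟩
      intro t1 h1 t2 h2 p q hp hq hpq
      simp only [smul_eq_mul]
      have hc := hS_conv.2 (Set.mem_Ici.mpr (mul_nonneg (le_of_lt h1) hx))
        (Set.mem_Ici.mpr (mul_nonneg (le_of_lt h2) hx)) hp hq hpq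
      simp only [smul_eq_mul] at hc
      have harg : (p * t1 + q * t2) * x = p * (t1 * x) + q * (t2 * x) := by ring
      rw [harg]
      exact hc
    apply key_prod hm (fun i => g (u i)) (fun t => S (t * x))
      (fun i => (hg _ (hu i)).1)
      (fun i j hij => hg_anti (Set.mem_Ioi.mpr (hu i)) (Set.mem_Ioi.mpr (hu j)) (hum hij))
      hφ_pos hφ_anti hφ_conv
      (fun i t ht => by
        have h1 := hg _ (hu i)
        have h2 := hS _ (mul_nonneg ht.le hx)
        nlinarith)
      α β hα hβ hαm hβm (hmaj_αβ m hm)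
  -- combine
  have hP12 : ∀ m ∈ Finset.Icc 1 n,
      q₁ m * prefixProd (fun i => 1 - g (v i) * S (α i * x)) m ≤
        q₁ m * prefixProd (fun i => 1 - g (u i) * S (β i * x)) m := by
    intro m hm
    rw [Finset.mem_Icc] at hm
    exact mul_le_mul_of_nonneg_left
      ((stepA m hm.2).trans (stepB m hm.2)) (hq₁ m (Finset.mem_Icc.mpr hm))
  have hFub : ∀ i : Fin n, 0 ≤ 1 - g (u i) * S (β i * x) := by
    intro i
    have h1 := hg _ (hu i)
    have h2 := hS _ (hβx i)
    nlinarith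
  have hFub1 : ∀ i : Fin n, 1 - g (u i) * S (β i * x) ≤ 1 := by
    intro i
    have h1 := hg _ (hu i)
    have h2 := hS _ (hβx i)
    nlinarith
  calc ∑ m ∈ Finset.Icc 1 n, q₁ m * prefixProd (fun i => 1 - g (v i) * S (α i * x)) m
      ≤ ∑ m ∈ Finset.Icc 1 n, q₁ m * prefixProd (fun i => 1 - g (u i) * S (β i * x)) m :=
        Finset.sum_le_sum hP12
    _ ≤ ∑ m ∈ Finset.Icc 1 n, q₂ m * prefixProd (fun i => 1 - g (u i) * S (β i * x)) m := by
        apply mix_le _ q₁ q₂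
          (fun k l hkl => prefixProd_anti hFub hFub1 hkl)
          (fun k => prefixProd_nonneg hFub k)
          hq₁sum hq₂sum hst
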